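/- Let V be a finite-dimensional real vector space with two inner products g and g̃, C the transfer operator defined by g(CX, Y) = g̃(X, Y), and Q the principal square root of C. Define bilinear forms on endomorphisms of V by G(A, B) = (1/2)·Σᵢ g(A eᵢ, B eᵢ) for any g-orthonormal basis (eᵢ), and G̃(A, B) = (1/2)·Σᵢ g̃(A ẽᵢ, B ẽᵢ) for any g̃-orthonormal basis (ẽᵢ). Then G(A, B) = G̃(Q⁻¹ ∘ A ∘ Q, Q⁻¹ ∘ B ∘ Q) for all endomorphisms A, B of V. -/

import Mathlib

open Matrix in

lemma sum_inv {n : ℕ} {V : Type*} [AddCommGroup V] [Module ℝ V]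
    (g : V →ₗ[ℝ] V →ₗ[ℝ] ℝ)
    (e : Module.Basis (Fin n) ℝ V)
    (he : ∀ i j, g (e i) (e j) = if i = j then 1 else 0)
    (f : Fin n → V)
    (hf : ∀ i j, g (f i) (f j) = if i = j then 1 else 0)
    (A B : V →ₗ[ℝ] V) :
    ∑ i : Fin n, g (A (f i)) (B (f i)) = ∑ i : Fin n, g (A (e i)) (B (e i)) := by
  set M : Matrix (Fin n) (Fin n) ℝ := fun i k => g (f i) (e k) with hM
  have hexp : ∀ X : V, X = ∑ k, g X (e k) • e k := by
    intro X
    have hrep : ∀ k, g X (e k) = e.repr X k := by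
      intro k
      conv_lhs => rw [← e.sum_repr X]
      simp [map_sum, he, Finset.sum_ite_eq', -Module.Basis.sum_repr]
    conv_lhs => rw [← e.sum_repr X]
    refine Finset.sum_congr rfl fun k _ => ?_
    rw [hrep k]
  have hone : M * Mᵀ = 1 := by
    ext i j
    simp only [Matrix.mul_apply, Matrix.transpose_apply]
    simp only [Matrix.mul_apply, Matrix.transpose_apply, hM, Matrix.one_apply]
    rw [← hf i j]
    conv_rhs => rw [hexp (f j)]
    simp [mul_comm]
  have hone' : Mᵀ * M = 1 := mul_eq_one_comm.mp hone
  have hdelta : ∀ k l, (∑ i, M i k * M i l) = if k = l then 1 else 0 := by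
    intro k l
    have := congrFun (congrFun hone' k) l
    simpa [Matrix.mul_apply, Matrix.transpose_apply, Matrix.one_apply] using this
  calc ∑ i, g (A (f i)) (B (f i))
      = ∑ i, ∑ k, ∑ l, M i k * M i l * g (A (e k)) (B (e l)) := by
        refine Finset.sum_congr rfl fun i _ => ?_
        conv_lhs => rw [hexp (f i)]
        simp only [map_sum, _root_.map_smul, LinearMap.sum_apply, LinearMap.smul_apply,
          smul_eq_mul, Finset.mul_sum, Finset.sum_mul, hM, mul_assoc]
        rw [Finset.sum_comm]
        exact Finset.sum_congr rfl fun k _ => Finset.sum_congr rfl fun l _ => by ring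
    _ = ∑ k, ∑ i, ∑ l, M i k * M i l * g (A (e k)) (B (e l)) := Finset.sum_comm
    _ = ∑ k, ∑ l, ∑ i, M i k * M i l * g (A (e k)) (B (e l)) :=
        Finset.sum_congr rfl fun k _ => Finset.sum_comm
    _ = ∑ k, ∑ l, (∑ i, M i k * M i l) * g (A (e k)) (B (e l)) := by
        simp [Finset.sum_mul]
    _ = ∑ i, g (A (e i)) (B (e i)) := by
        simp [hdelta, ite_mul, Finset.sum_ite_eq']



/-- With G(A,B) = (1/2)·Σᵢ g(A eᵢ, B eᵢ) for a g-orthonormal basis (eᵢ) and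
G̃(A,B) = (1/2)·Σᵢ g̃(A ẽᵢ, B ẽᵢ) for a g̃-orthonormal basis (ẽᵢ), one has
G(A,B) = G̃(Q⁻¹∘A∘Q, Q⁻¹∘B∘Q) for all endomorphisms A, B of V, where Q is the principal
square root of the transfer operator C. -/
theorem stmt_4 {n : ℕ} (V : Type*) [AddCommGroup V] [Module ℝ V] [FiniteDimensional ℝ V]
    (g gt : V →ₗ[ℝ] V →ₗ[ℝ] ℝ)
    (hg_symm : ∀ X Y : V, g X Y = g Y X)
    (hg_pos : ∀ X : V, X ≠ 0 → 0 < g X X)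
    (hgt_symm : ∀ X Y : V, gt X Y = gt Y X)
    (hgt_pos : ∀ X : V, X ≠ 0 → 0 < gt X X)
    (C : V →ₗ[ℝ] V)
    (hC : ∀ X Y : V, g (C X) Y = gt X Y)
    (Q : V →ₗ[ℝ] V)
    (hQ_sa : ∀ X Y : V, g (Q X) Y = g X (Q Y))
    (hQ_pos : ∀ X : V, X ≠ 0 → 0 < g (Q X) X)
    (hQ2 : Q ∘ₗ Q = C)
    (Qinv : V →ₗ[ℝ] V)
    (hQinv₁ : Qinv ∘ₗ Q = LinearMap.id) (hQinv₂ : Q ∘ₗ Qinv = LinearMap.id)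
    (e : Module.Basis (Fin n) ℝ V)
    (he : ∀ i j, g (e i) (e j) = if i = j then 1 else 0)
    (et : Module.Basis (Fin n) ℝ V)
    (het : ∀ i j, gt (et i) (et j) = if i = j then 1 else 0) :
    ∀ A B : V →ₗ[ℝ] V,
      (1/2 : ℝ) * ∑ i : Fin n, g (A (e i)) (B (e i)) =
      (1/2 : ℝ) * ∑ i : Fin n,
        gt ((Qinv ∘ₗ A ∘ₗ Q) (et i)) ((Qinv ∘ₗ B ∘ₗ Q) (et i)) := by
  intro A B
  congr 1
  have hQQ : ∀ x : V, Q (Qinv x) = x := fun x => LinearMap.congr_fun hQinv₂ x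
  have hQ2' : ∀ x : V, Q (Q x) = C x := fun x => LinearMap.congr_fun hQ2 x
  have key : ∀ x : V,
      gt ((Qinv ∘ₗ A ∘ₗ Q) x) ((Qinv ∘ₗ B ∘ₗ Q) x) = g (A (Q x)) (B (Q x)) := by
    intro x
    simp only [LinearMap.comp_apply]
    rw [← hC, ← hQ2']
    rw [hQQ, hQ_sa, hQQ]
  have horth : ∀ i j, g (Q (et i)) (Q (et j)) = if i = j then 1 else 0 := by
    intro i j
    rw [hQ_sa, hQ2', hg_symm, hC, het]
    simp [eq_comm]
  simp only [key]
  exact (sum_inv g e he (fun i => Q (et i)) horth A B).symm
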